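/- Let H₀, H₁, H₂ > 0 satisfy |H_i² − H₀²| ≤ 3s·H₀² for i = 1,2, and consider the affine function e^F(λ¹,λ²) = H₀² + λ¹(H₁²−H₀²) + λ²(H₂²−H₀²) on a Euclidean triangle with all edge lengths ≤ ε and area A ≥ ϑε²/2 (ϑ > 0). Then the g^Δ-norm of the differential satisfies |de^F|²_{g^Δ} ≤ 36 s² H₀⁴ / (ϑ² ε²). -/
import Mathlib


open Real

/-- Lemma 6.8 (gradient bound for the interpolated ratio function): on a
`(ϑ,ε)`-full Euclidean triangle (edge lengths `≤ ε`, area `A ≥ ϑε²/2`), the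
`g^Δ`-norm squared of the differential of the affine function
`e^F(λ¹,λ²) = H₀² + λ¹(H₁²−H₀²) + λ²(H₂²−H₀²)`, computed via the inverse metric
`(1/(4A²))·[[ℓ₀₂², −ℓ₀₁ℓ₀₂cos φ],[−ℓ₀₁ℓ₀₂cos φ, ℓ₀₁²]]`, is at most
`36 s² H₀⁴ / (ϑ² ε²)`. -/
theorem deF_norm_bound (ℓ01 ℓ02 φ A ϑ ε s : ℝ) (H0 H1 H2 : ℝ)
    (hϑ : 0 < ϑ) (hε : 0 < ε) (hs : 0 ≤ s)
    (h01pos : 0 < ℓ01) (h02pos : 0 < ℓ02)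
    (h01 : ℓ01 ≤ ε) (h02 : ℓ02 ≤ ε)
    (hA : A = (1 / 2) * ℓ01 * ℓ02 * Real.sin φ)
    (hAfull : ϑ * ε ^ 2 / 2 ≤ A)
    (hH0 : 0 < H0) (hH1 : 0 < H1) (hH2 : 0 < H2)
    (hclose1 : |H1 ^ 2 - H0 ^ 2| ≤ 3 * s * H0 ^ 2)
    (hclose2 : |H2 ^ 2 - H0 ^ 2| ≤ 3 * s * H0 ^ 2) :
    ((H1 ^ 2 - H0 ^ 2) ^ 2 * ℓ02 ^ 2 + (H2 ^ 2 - H0 ^ 2) ^ 2 * ℓ01 ^ 2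
        - 2 * (H1 ^ 2 - H0 ^ 2) * (H2 ^ 2 - H0 ^ 2) * (ℓ01 * ℓ02 * Real.cos φ))
        / (4 * A ^ 2)
      ≤ 36 * s ^ 2 * H0 ^ 4 / (ϑ ^ 2 * ε ^ 2) := by

  set a := H1 ^ 2 - H0 ^ 2 with ha
  set b := H2 ^ 2 - H0 ^ 2 with hb
  have hAε : 0 < ϑ * ε ^ 2 / 2 := by positivity
  have hApos : 0 < A := lt_of_lt_of_le hAε hAfull
  have hcos : |Real.cos φ| ≤ 1 := Real.abs_cos_le_one φ
  have habs_a : |a| ≤ 3 * s * H0 ^ 2 := hclose1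
  have habs_b : |b| ≤ 3 * s * H0 ^ 2 := hclose2
  have ha1 : a ≤ |a| := le_abs_self a
  have ha2 : -|a| ≤ a := neg_abs_le a
  have hb1 : b ≤ |b| := le_abs_self b
  have hb2 : -|b| ≤ b := neg_abs_le b
  have hc1 : Real.cos φ ≤ 1 := (abs_le.mp hcos).2
  have hc2 : -1 ≤ Real.cos φ := (abs_le.mp hcos).1
  have hnum : a ^ 2 * ℓ02 ^ 2 + b ^ 2 * ℓ01 ^ 2
      - 2 * a * b * (ℓ01 * ℓ02 * Real.cos φ) ≤ 36 * s ^ 2 * H0 ^ 4 * ε ^ 2 := by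
    have key : a ^ 2 * ℓ02 ^ 2 + b ^ 2 * ℓ01 ^ 2
        - 2 * a * b * (ℓ01 * ℓ02 * Real.cos φ)
        ≤ (|a| * ℓ02 + |b| * ℓ01) ^ 2 := by
      have h1 : |a * b * Real.cos φ| ≤ |a| * |b| := by
        rw [abs_mul, abs_mul]
        calc |a| * |b| * |Real.cos φ| ≤ |a| * |b| * 1 :=
              mul_le_mul_of_nonneg_left hcos (by positivity)
          _ = |a| * |b| := by ring
      have hmul : -(|a| * |b|) ≤ a * b * Real.cos φ :=
        le_trans (neg_le_neg h1) (neg_abs_le _)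
      have hmul2 : -(|a| * |b|) * (ℓ01 * ℓ02) ≤ a * b * Real.cos φ * (ℓ01 * ℓ02) :=
        mul_le_mul_of_nonneg_right hmul (by positivity)
      nlinarith [sq_abs a, sq_abs b, hmul2]
    have hsum : |a| * ℓ02 + |b| * ℓ01 ≤ 3 * s * H0 ^ 2 * (2 * ε) := by
      have t1 : |a| * ℓ02 ≤ 3 * s * H0 ^ 2 * ε :=
        mul_le_mul habs_a h02 h02pos.le (by positivity)
      have t2 : |b| * ℓ01 ≤ 3 * s * H0 ^ 2 * ε :=
        mul_le_mul habs_b h01 h01pos.le (by positivity)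
      linarith
    have h2 : (|a| * ℓ02 + |b| * ℓ01) ^ 2 ≤ (3 * s * H0 ^ 2 * (2 * ε)) ^ 2 :=
      pow_le_pow_left₀ (by positivity) hsum 2
    have hring : (3 * s * H0 ^ 2 * (2 * ε)) ^ 2 = 36 * s ^ 2 * H0 ^ 4 * ε ^ 2 := by ring
    linarith
  have hden : ϑ ^ 2 * ε ^ 4 ≤ 4 * A ^ 2 := by
    have hsq : (ϑ * ε ^ 2 / 2) ^ 2 ≤ A ^ 2 := pow_le_pow_left₀ hAε.le hAfull 2
    have : ϑ ^ 2 * ε ^ 4 = 4 * (ϑ * ε ^ 2 / 2) ^ 2 := by ring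
    linarith
  have hd1 : 0 < ϑ ^ 2 * ε ^ 4 := by positivity
  calc (a ^ 2 * ℓ02 ^ 2 + b ^ 2 * ℓ01 ^ 2 - 2 * a * b * (ℓ01 * ℓ02 * Real.cos φ))
        / (4 * A ^ 2)
      ≤ (36 * s ^ 2 * H0 ^ 4 * ε ^ 2) / (ϑ ^ 2 * ε ^ 4) := by
        apply div_le_div₀ (by positivity) hnum hd1 hden
    _ = 36 * s ^ 2 * H0 ^ 4 / (ϑ ^ 2 * ε ^ 2) := by
        rw [show ϑ ^ 2 * ε ^ 4 = (ϑ ^ 2 * ε ^ 2) * ε ^ 2 by ring,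
          show 36 * s ^ 2 * H0 ^ 4 * ε ^ 2 = ε ^ 2 * (36 * s ^ 2 * H0 ^ 4) by ring,
          show (ϑ ^ 2 * ε ^ 2) * ε ^ 2 = ε ^ 2 * (ϑ ^ 2 * ε ^ 2) by ring,
          mul_div_mul_left _ _ (by positivity : (ε:ℝ) ^ 2 ≠ 0)]
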